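/- Let 𝒜 be a finite nonempty set and ℋ a finite set of N ≥ 1 functions from 𝒜 to {−1,+1}, each of which takes both values +1 and −1 somewhere on 𝒜. Then there exists a probability mass function P on 𝒜 such that max_{h∈ℋ} |Σ_{A∈𝒜} h(A) P(A)| ≤ 1 − N^{−1}; that is, the coherence parameter of (𝒜, ℋ) is at most 1 − N^{−1}. -/

import Mathlib

/-- trivial coherence bound: if every hypothesis in `ℋ` (a set of `N ≥ 1`
functions `𝒜 → {−1,+1}` on a finite nonempty set `𝒜`) takes both values `+1` and `−1`,
then there is a probability mass function `P` on `𝒜` with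
`max_{h∈ℋ} |Σ_A h(A) P(A)| ≤ 1 − N⁻¹`. -/
theorem stmt19 {𝒜 : Type*} [Fintype 𝒜] [Nonempty 𝒜] (ℋ : Finset (𝒜 → ℝ))
    (hpm : ∀ h ∈ ℋ, ∀ A, h A = 1 ∨ h A = -1)
    (hboth : ∀ h ∈ ℋ, (∃ A, h A = 1) ∧ ∃ A, h A = -1)
    (N : ℕ) (hN : ℋ.card = N) (hN1 : 1 ≤ N) :
    ∃ P : 𝒜 → ℝ, (∀ A, 0 ≤ P A) ∧ (∑ A, P A) = 1 ∧
      ∀ h ∈ ℋ, |∑ A, h A * P A| ≤ 1 - (N : ℝ)⁻¹ := by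
  classical
  have hNpos : (0:ℝ) < N := by exact_mod_cast hN1
  set a : (𝒜 → ℝ) → 𝒜 := fun g =>
    if hh : ∃ A, g A = 1 then hh.choose else Classical.arbitrary 𝒜 with ha
  set b : (𝒜 → ℝ) → 𝒜 := fun g =>
    if hh : ∃ A, g A = -1 then hh.choose else Classical.arbitrary 𝒜 with hb
  have haval : ∀ g ∈ ℋ, g (a g) = 1 := by
    intro g hg
    have hh : ∃ A, g A = 1 := (hboth g hg).1
    simp only [ha, dif_pos hh]
    exact hh.choose_spec
  have hbval : ∀ g ∈ ℋ, g (b g) = -1 := by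
    intro g hg
    have hh : ∃ A, g A = -1 := (hboth g hg).2
    simp only [hb, dif_pos hh]
    exact hh.choose_spec
  refine ⟨fun A => (∑ g ∈ ℋ, ((if a g = A then (1:ℝ) else 0) +
      (if b g = A then (1:ℝ) else 0))) / (2 * N), ?_, ?_, ?_⟩
  · intro A
    apply div_nonneg
    · apply Finset.sum_nonneg
      intro g _
      positivity
    · positivity
  · rw [← Finset.sum_div]
    rw [Finset.sum_comm]
    have : ∀ g ∈ ℋ, (∑ A : 𝒜, ((if a g = A then (1:ℝ) else 0) +
        (if b g = A then (1:ℝ) else 0))) = 2 := by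
      intro g _
      rw [Finset.sum_add_distrib]
      simp
      norm_num
    rw [Finset.sum_congr rfl this]
    rw [Finset.sum_const, hN]
    field_simp
    ring
  · intro h hh
    have key : (∑ A, h A * ((∑ g ∈ ℋ, ((if a g = A then (1:ℝ) else 0) +
        (if b g = A then (1:ℝ) else 0))) / (2 * N)))
        = (∑ g ∈ ℋ, (h (a g) + h (b g))) / (2 * N) := by
      simp only [← mul_div_assoc]
      rw [← Finset.sum_div]
      congr 1
      simp only [Finset.mul_sum]
      rw [Finset.sum_comm]
      apply Finset.sum_congr rfl
      intro g _
      simp [mul_add, Finset.sum_add_distrib, mul_ite, mul_one, mul_zero]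
    rw [key]
    rw [Finset.sum_eq_add_sum_sdiff_singleton_of_mem hh]
    rw [haval h hh, hbval h hh]
    have hbound : |∑ g ∈ ℋ \ {h}, (h (a g) + h (b g))| ≤ 2 * (N - 1) := by
      calc |∑ g ∈ ℋ \ {h}, (h (a g) + h (b g))|
          ≤ ∑ g ∈ ℋ \ {h}, |h (a g) + h (b g)| := Finset.abs_sum_le_sum_abs _ _
        _ ≤ ∑ g ∈ ℋ \ {h}, 2 := by
            apply Finset.sum_le_sum
            intro g _
            have h1 : |h (a g)| ≤ 1 := by
              rcases hpm h hh (a g) with e | e <;> rw [e] <;> norm_num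
            have h2 : |h (b g)| ≤ 1 := by
              rcases hpm h hh (b g) with e | e <;> rw [e] <;> norm_num
            calc |h (a g) + h (b g)| ≤ |h (a g)| + |h (b g)| := abs_add_le _ _
              _ ≤ 2 := by linarith
        _ = 2 * (N - 1) := by
            rw [Finset.sum_const, Finset.card_sdiff_of_subset (by simpa using hh)]
            simp [hN]
            have : (1:ℕ) ≤ N := hN1
            push_cast [Nat.cast_sub this]
            ring
    have h2N : (0:ℝ) < 2 * N := by positivity
    rw [abs_div, abs_of_pos h2N, div_le_iff₀ h2N]
    have : |1 + -1 + ∑ g ∈ ℋ \ {h}, (h (a g) + h (b g))|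
        = |∑ g ∈ ℋ \ {h}, (h (a g) + h (b g))| := by norm_num
    rw [this]
    have hrhs : (1 - (N:ℝ)⁻¹) * (2 * N) = 2 * (N - 1) := by
      field_simp
    rw [hrhs]
    exact hbound
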